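/- Let f be a Laurent polynomial over R with Newton polytope Δ(f), let J = Δ(f)° ∩ ℤⁿ be the set of interior lattice points, α_s the g×g matrix with (α_s)_{u,v} = coefficient of x^(p^s·v − u) in f^(p^s − 1), and γ_s the matrix with (γ_s)_{u,v} = coefficient of x^(p^s·v − u) in δ_s(f). Then α_s = γ_1·σ(α_{s-1}) + γ_2·σ²(α_{s-2}) + ... + γ_{s-1}·σ^{s-1}(α_1) + γ_s for all s ≥ 1, where σ acts entrywise on matrices, α_0 is the identity matrix, and δ_s(f) is defined by the recursion f^(p^s-1) = Σ_{i=1}^s δ_i(f)·σ^i(f^(p^{s-i}-1)). -/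

import Mathlib

open Finset Pointwise

section HHWaux

variable {R : Type*} [CommRing R] {n : ℕ}

/-- the image map from lattice points to real vectors -/
noncomputable def hhwIm {n : ℕ} : (Fin n → ℤ) → (Fin n → ℝ) :=
  fun w i => (w i : ℝ)

lemma hhwIm_add (a b : Fin n → ℤ) : hhwIm (a + b) = hhwIm a + hhwIm b := by
  funext i; simp [hhwIm]

lemma hhwIm_smul (z : ℤ) (a : Fin n → ℤ) : hhwIm (z • a) = (z : ℝ) • hhwIm a := by
  funext i; simp [hhwIm]

variable (p : ℕ) (σ : R →+* R)
  (σ' : AddMonoidAlgebra R (Fin n → ℤ) →+* AddMonoidAlgebra R (Fin n → ℤ))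
  (hσ' : ∀ (u : Fin n → ℤ) (r : R),
    σ' (AddMonoidAlgebra.single u r) = AddMonoidAlgebra.single ((p : ℤ) • u) (σ r))

include hσ' in
lemma hhw_sigma'_eq (h : AddMonoidAlgebra R (Fin n → ℤ)) :
    σ' h = h.coeff.sum fun w c => AddMonoidAlgebra.single ((p : ℤ) • w) (σ c) := by
  conv_lhs => rw [← h.sum_single]
  rw [Finsupp.sum, map_sum, Finsupp.sum]
  exact Finset.sum_congr rfl fun w _ => hσ' w (h.coeff w)

include hσ' in
lemma hhw_sigma'_apply_smul (hp : p ≠ 0) (h : AddMonoidAlgebra R (Fin n → ℤ))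
    (τ : Fin n → ℤ) : (σ' h).coeff ((p : ℤ) • τ) = σ (h.coeff τ) := by
  classical
  rw [hhw_sigma'_eq p σ σ' hσ' h, AddMonoidAlgebra.coeff_finsuppSum, Finsupp.sum_apply, Finsupp.sum]
  have hinj : Function.Injective fun w : Fin n → ℤ => (p : ℤ) • w :=
    smul_right_injective _ (by exact_mod_cast hp)
  have : ∀ w ∈ h.coeff.support,
      (AddMonoidAlgebra.single ((p:ℤ) • w) (σ (h.coeff w)) : AddMonoidAlgebra R (Fin n → ℤ)).coeff
        ((p:ℤ) • τ) = if τ = w then σ (h.coeff w) else 0 := by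
    intro w _
    rw [AddMonoidAlgebra.coeff_single, Finsupp.single_apply]
    congr 1
    simp only [eq_iff_iff]
    constructor
    · intro hw; exact (hinj hw).symm
    · rintro rfl; rfl
  rw [Finset.sum_congr rfl this, Finset.sum_ite_eq]
  split
  · rfl
  · next hτ => rw [Finsupp.notMem_support_iff.mp hτ, map_zero]

include hσ' in
lemma hhw_sigma'_apply_ne (h : AddMonoidAlgebra R (Fin n → ℤ)) (m : Fin n → ℤ)
    (hm : ∀ τ, m ≠ (p : ℤ) • τ) : (σ' h).coeff m = 0 := by
  classical
  rw [hhw_sigma'_eq p σ σ' hσ' h, AddMonoidAlgebra.coeff_finsuppSum, Finsupp.sum_apply, Finsupp.sum]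
  refine Finset.sum_eq_zero fun w _ => ?_
  rw [AddMonoidAlgebra.coeff_single, Finsupp.single_apply, if_neg fun hc => hm w hc.symm]

include hσ' in
lemma hhw_iter_apply_smul (hp : p ≠ 0) (i : ℕ) (h : AddMonoidAlgebra R (Fin n → ℤ))
    (τ : Fin n → ℤ) : ((⇑σ')^[i] h).coeff ((p : ℤ) ^ i • τ) = (⇑σ)^[i] (h.coeff τ) := by
  induction i with
  | zero => simp
  | succ i ih =>
      rw [Function.iterate_succ', Function.iterate_succ']
      have : ((p : ℤ) ^ (i + 1)) • τ = (p : ℤ) • ((p : ℤ) ^ i • τ) := by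
        rw [smul_smul, pow_succ, mul_comm]
      rw [this]
      simp only [Function.comp_apply]
      rw [hhw_sigma'_apply_smul p σ σ' hσ' hp, ih]

include hσ' in
lemma hhw_iter_apply_exists (hp : p ≠ 0) (i : ℕ) (h : AddMonoidAlgebra R (Fin n → ℤ))
    (m : Fin n → ℤ) (hne : ((⇑σ')^[i] h).coeff m ≠ 0) : ∃ τ, m = (p : ℤ) ^ i • τ := by
  induction i generalizing m with
  | zero => exact ⟨m, by simp⟩
  | succ i ih =>
      rw [Function.iterate_succ'] at hne
      simp only [Function.comp_apply] at hne
      by_cases hτ0 : ∃ τ₀, m = (p : ℤ) • τ₀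
      · obtain ⟨τ₀, rfl⟩ := hτ0
        rw [hhw_sigma'_apply_smul p σ σ' hσ' hp] at hne
        have h2 : ((⇑σ')^[i] h).coeff τ₀ ≠ 0 := fun hc => hne (by rw [hc, map_zero])
        obtain ⟨τ, rfl⟩ := ih τ₀ h2
        exact ⟨τ, by rw [smul_smul, pow_succ, mul_comm]⟩
      · push_neg at hτ0
        exact absurd (hhw_sigma'_apply_ne p σ σ' hσ' _ m hτ0) hne

include hσ' in
lemma hhw_iter_support (hp : p ≠ 0) (i : ℕ) (h : AddMonoidAlgebra R (Fin n → ℤ))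
    (w : Fin n → ℤ) (hw : w ∈ ((⇑σ')^[i] h).coeff.support) :
    ∃ b ∈ h.coeff.support, w = (p : ℤ) ^ i • b := by
  have hne : ((⇑σ')^[i] h).coeff w ≠ 0 := Finsupp.mem_support_iff.mp hw
  obtain ⟨b, rfl⟩ := hhw_iter_apply_exists p σ σ' hσ' hp i h w hne
  rw [hhw_iter_apply_smul p σ σ' hσ' hp] at hne
  have hb : h.coeff b ≠ 0 := by
    intro hc
    rw [hc] at hne
    exact hne (Function.iterate_fixed (map_zero σ) i)
  exact ⟨b, Finsupp.mem_support_iff.mpr hb, rfl⟩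

lemma hhw_pow_support (f : AddMonoidAlgebra R (Fin n → ℤ))
    (hne : (convexHull ℝ (hhwIm '' (f.coeff.support : Set (Fin n → ℤ)))).Nonempty)
    (k : ℕ) (w : Fin n → ℤ) (hw : w ∈ (f ^ k).coeff.support) :
    hhwIm w ∈ (k : ℝ) • convexHull ℝ (hhwIm '' (f.coeff.support : Set (Fin n → ℤ))) := by
  classical
  induction k generalizing w with
  | zero =>
      simp only [pow_zero] at hw
      have hw' : w ∈ (AddMonoidAlgebra.single (0 : Fin n → ℤ) (1 : R)).coeff.support := by
        rwa [← AddMonoidAlgebra.one_def]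
      have hw0 : w = 0 := Finset.mem_singleton.mp (Finsupp.support_single_subset hw')
      subst hw0
      rw [Nat.cast_zero, Set.zero_smul_set hne, Set.mem_zero]
      funext i
      simp [hhwIm]
  | succ k ih =>
      rw [pow_succ] at hw
      have := AddMonoidAlgebra.support_coeff_mul_subset _ _ hw
      rw [Finset.mem_add] at this
      obtain ⟨a, ha, b, hb, rfl⟩ := this
      have h1 := ih a ha
      have h2 : hhwIm b ∈ convexHull ℝ (hhwIm '' (f.coeff.support : Set (Fin n → ℤ))) :=
        subset_convexHull ℝ _ ⟨b, hb, rfl⟩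
      rw [hhwIm_add]
      have : ((k : ℝ) + 1) • convexHull ℝ (hhwIm '' (f.coeff.support : Set (Fin n → ℤ)))
          = (k : ℝ) • convexHull ℝ (hhwIm '' (f.coeff.support : Set (Fin n → ℤ)))
            + (1 : ℝ) • convexHull ℝ (hhwIm '' (f.coeff.support : Set (Fin n → ℤ))) :=
        (convex_convexHull ℝ _).add_smul (by positivity) zero_le_one
      rw [Nat.cast_succ, this]
      exact Set.add_mem_add h1 (by rwa [one_smul])

end HHWaux

section HHWdelta

variable {R : Type*} [CommRing R] {n : ℕ} (p : ℕ) (σ : R →+* R)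
  (σ' : AddMonoidAlgebra R (Fin n → ℤ) →+* AddMonoidAlgebra R (Fin n → ℤ))
  (hσ' : ∀ (u : Fin n → ℤ) (r : R),
    σ' (AddMonoidAlgebra.single u r) = AddMonoidAlgebra.single ((p : ℤ) • u) (σ r))

include hσ' in
lemma hhw_delta_support (hp : p ≠ 0) (f : AddMonoidAlgebra R (Fin n → ℤ))
    (δ : ℕ → AddMonoidAlgebra R (Fin n → ℤ))
    (hδ : ∀ s : ℕ, 1 ≤ s →
      f ^ (p ^ s - 1) = ∑ i ∈ Finset.Icc 1 s, δ i * (⇑σ')^[i] (f ^ (p ^ (s - i) - 1)))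
    (hne : (convexHull ℝ (hhwIm '' (f.coeff.support : Set (Fin n → ℤ)))).Nonempty) :
    ∀ i, 1 ≤ i → ∀ w ∈ (δ i).coeff.support,
      hhwIm w ∈ ((p : ℝ) ^ i - 1) • convexHull ℝ (hhwIm '' (f.coeff.support : Set (Fin n → ℤ))) := by
  classical
  have hp1 : (1 : ℝ) ≤ (p : ℝ) := by exact_mod_cast Nat.one_le_iff_ne_zero.mpr hp
  intro i
  induction i using Nat.strong_induction_on with
  | _ i IH =>
    intro hi w hw
    obtain ⟨m, rfl⟩ : ∃ m, i = m + 1 := ⟨i - 1, (Nat.succ_pred_eq_of_pos hi).symm⟩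
    have hrec := hδ (m + 1) (Nat.le_add_left 1 m)
    rw [Finset.sum_Icc_succ_top (Nat.le_add_left 1 m)] at hrec
    have hone : (⇑σ')^[m + 1] (f ^ (p ^ ((m + 1) - (m + 1)) - 1)) = 1 := by
      rw [Nat.sub_self, pow_zero, Nat.sub_self, pow_zero]
      exact Function.iterate_fixed (map_one σ') (m + 1)
    rw [hone, mul_one] at hrec
    have hδi : δ (m + 1) = f ^ (p ^ (m + 1) - 1)
        - ∑ j ∈ Finset.Icc 1 m, δ j * (⇑σ')^[j] (f ^ (p ^ ((m + 1) - j) - 1)) := by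
      rw [hrec]; abel
    rw [hδi, AddMonoidAlgebra.coeff_sub, AddMonoidAlgebra.coeff_sum] at hw
    rcases Finset.mem_union.mp (Finsupp.support_sub hw) with h1 | h2
    · have h := hhw_pow_support f hne _ w h1
      rwa [Nat.cast_sub (Nat.one_le_pow _ _ (Nat.pos_of_ne_zero hp)), Nat.cast_pow,
        Nat.cast_one] at h
    · have h := Finsupp.support_finset_sum h2
      obtain ⟨j, hj, hwj⟩ := Finset.mem_biUnion.mp h
      obtain ⟨hj1, hjm⟩ := Finset.mem_Icc.mp hj
      have hmem := AddMonoidAlgebra.support_coeff_mul_subset _ _ hwj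
      rw [Finset.mem_add] at hmem
      obtain ⟨a, ha, b, hb, rfl⟩ := hmem
      have h1 := IH j (by omega) hj1 a ha
      obtain ⟨c, hc, rfl⟩ := hhw_iter_support p σ σ' hσ' hp j _ b hb
      have h2 := hhw_pow_support f hne _ c hc
      have hcast : ((p ^ ((m + 1) - j) - 1 : ℕ) : ℝ) = (p : ℝ) ^ ((m + 1) - j) - 1 := by
        rw [Nat.cast_sub (Nat.one_le_pow _ _ (Nat.pos_of_ne_zero hp))]; push_cast; ring
      rw [hcast] at h2
      rw [hhwIm_add, hhwIm_smul]
      have hzc : (((p : ℤ) ^ j : ℤ) : ℝ) = (p : ℝ) ^ j := by push_cast; ring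
      rw [hzc]
      have h2' : (p : ℝ) ^ j • hhwIm c
          ∈ ((p : ℝ) ^ j * ((p : ℝ) ^ ((m + 1) - j) - 1)) •
            convexHull ℝ (hhwIm '' (f.coeff.support : Set (Fin n → ℤ))) := by
        rw [← smul_smul]
        exact Set.smul_mem_smul_set h2
      have hpowsum : (p : ℝ) ^ j * (p : ℝ) ^ ((m + 1) - j) = (p : ℝ) ^ (m + 1) := by
        rw [← pow_add]; congr 1; omega
      have hsplit : ((p : ℝ) ^ (m + 1) - 1)
          = ((p : ℝ) ^ j - 1) + (p : ℝ) ^ j * ((p : ℝ) ^ ((m + 1) - j) - 1) := by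
        rw [mul_sub, hpowsum]; ring
      have hn1 : (0 : ℝ) ≤ (p : ℝ) ^ j - 1 := sub_nonneg.mpr (one_le_pow₀ hp1)
      have hn2 : (0 : ℝ) ≤ (p : ℝ) ^ j * ((p : ℝ) ^ ((m + 1) - j) - 1) :=
        mul_nonneg (pow_nonneg (by linarith) _) (sub_nonneg.mpr (one_le_pow₀ hp1))
      rw [hsplit, (convex_convexHull ℝ _).add_smul hn1 hn2]
      exact Set.add_mem_add h1 h2'

end HHWdelta

lemma hhw_mul_apply {R : Type*} [CommRing R] {n : ℕ}
    (a b : AddMonoidAlgebra R (Fin n → ℤ)) (x : Fin n → ℤ) :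
    (a * b).coeff x = ∑ w ∈ a.coeff.support, a.coeff w * b.coeff (x - w) := by
  conv_lhs => rw [← a.sum_single]
  rw [Finsupp.sum_mul, AddMonoidAlgebra.coeff_finsuppSum, Finsupp.sum_apply, Finsupp.sum]
  refine Finset.sum_congr rfl fun w _ => ?_
  rw [AddMonoidAlgebra.coeff_single_mul_apply, neg_add_eq_sub]

/-- Lemma 3(ii) of the paper:
`α_s = γ_1·σ(α_{s-1}) + γ_2·σ²(α_{s-2}) + ⋯ + γ_s` for `s ≥ 1`. -/
theorem higher_hasse_witt_recursion {R : Type*} [CommRing R] {n : ℕ} (p : ℕ) (hp : p.Prime)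
    (σ : R →+* R) (hσ : ∀ r : R, σ r - r ^ p ∈ Ideal.span {(p : R)})
    (σ' : AddMonoidAlgebra R (Fin n → ℤ) →+* AddMonoidAlgebra R (Fin n → ℤ))
    (hσ' : ∀ (u : Fin n → ℤ) (r : R),
      σ' (AddMonoidAlgebra.single u r) = AddMonoidAlgebra.single ((p : ℤ) • u) (σ r))
    (f : AddMonoidAlgebra R (Fin n → ℤ))
    (δ : ℕ → AddMonoidAlgebra R (Fin n → ℤ))
    (hδ : ∀ s : ℕ, 1 ≤ s →
      f ^ (p ^ s - 1) = ∑ i ∈ Finset.Icc 1 s, δ i * (⇑σ')^[i] (f ^ (p ^ (s - i) - 1)))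
    -- `J` is the set of interior lattice points of the Newton polytope of `f`
    (J : Finset (Fin n → ℤ)) (hJne : J.Nonempty)
    (hJ : ∀ u : Fin n → ℤ, u ∈ J ↔ (fun i => (u i : ℝ)) ∈
      interior (convexHull ℝ ((fun (w : Fin n → ℤ) (i : Fin n) => (w i : ℝ)) '' f.coeff.support)))
    -- the matrices α and γ
    (α γ : ℕ → Matrix J J R)
    (hα : ∀ (s : ℕ) (u v : J), α s u v = (f ^ (p ^ s - 1)).coeff ((p : ℤ) ^ s • (v : Fin n → ℤ) - u))
    (hγ : ∀ (s : ℕ) (u v : J), γ s u v = (δ s).coeff ((p : ℤ) ^ s • (v : Fin n → ℤ) - u))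
    (s : ℕ) (hs : 1 ≤ s) :
    α s = ∑ i ∈ Finset.Icc 1 s, γ i * (α (s - i)).map (⇑σ)^[i] := by
  classical
  have hpz : (p : ℤ) ≠ 0 := by exact_mod_cast hp.ne_zero
  have hppow : ∀ i : ℕ, ((p : ℤ) ^ i) ≠ 0 := fun i => pow_ne_zero i hpz
  obtain ⟨u0, hu0⟩ := hJne
  have hΔne : (convexHull ℝ (hhwIm '' (f.coeff.support : Set (Fin n → ℤ)))).Nonempty :=
    ⟨_, interior_subset ((hJ u0).mp hu0)⟩
  ext u v
  rw [hα, hδ s hs, AddMonoidAlgebra.coeff_sum, Finsupp.finset_sum_apply, Matrix.sum_apply]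
  refine Finset.sum_congr rfl fun i hi => ?_
  obtain ⟨hi1, his⟩ := Finset.mem_Icc.mp hi
  have hkey : ∀ w ∈ (δ i).coeff.support, ∀ t : Fin n → ℤ,
      (p : ℤ) ^ i • t = w + (u : Fin n → ℤ) → t ∈ J := by
    intro w hw t ht
    obtain ⟨d, hd, hwd⟩ :=
      hhw_delta_support p σ σ' hσ' hp.ne_zero f δ hδ hΔne i hi1 w hw
    have hu : hhwIm (u : Fin n → ℤ)
        ∈ interior (convexHull ℝ (hhwIm '' (f.coeff.support : Set (Fin n → ℤ)))) := (hJ u).mp u.2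
    have hP0 : (0 : ℝ) < (p : ℝ) := by exact_mod_cast hp.pos
    have hPpos : (0 : ℝ) < (p : ℝ) ^ i := by positivity
    have him : ((p : ℝ) ^ i) • hhwIm t = hhwIm w + hhwIm (u : Fin n → ℤ) := by
      have h := congrArg hhwIm ht
      rw [hhwIm_smul, hhwIm_add] at h
      rw [← h]
      congr 1
      push_cast
      ring
    have ht' : hhwIm t = ((p : ℝ) ^ i)⁻¹ • (hhwIm w + hhwIm (u : Fin n → ℤ)) := by
      rw [← him, inv_smul_smul₀ (ne_of_gt hPpos)]
    have hcombo : hhwIm t = ((p : ℝ) ^ i)⁻¹ • hhwIm (u : Fin n → ℤ)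
        + (((p : ℝ) ^ i)⁻¹ * ((p : ℝ) ^ i - 1)) • d := by
      rw [ht', ← hwd, smul_add, smul_smul, add_comm]
    have hint : hhwIm t
        ∈ interior (convexHull ℝ (hhwIm '' (f.coeff.support : Set (Fin n → ℤ)))) := by
      rw [hcombo]
      refine (convex_convexHull ℝ _).combo_interior_self_mem_interior hu hd
        (inv_pos.mpr hPpos) ?_ ?_
      · have : (1 : ℝ) ≤ (p : ℝ) ^ i := one_le_pow₀ (by exact_mod_cast hp.one_le)
        have h2 : (0 : ℝ) ≤ (p : ℝ) ^ i - 1 := by linarith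
        positivity
      · field_simp
        ring
    exact (hJ t).mpr hint
  set g := f ^ (p ^ (s - i) - 1) with hg
  set M : Fin n → ℤ := (p : ℤ) ^ s • (v : Fin n → ℤ) - (u : Fin n → ℤ) with hM
  set F : (Fin n → ℤ) → R := fun w => (δ i).coeff w * ((⇑σ')^[i] g).coeff (M - w) with hF
  set e : (Fin n → ℤ) → (Fin n → ℤ) := fun t => (p : ℤ) ^ i • t - (u : Fin n → ℤ) with he
  have he_inj : ∀ x ∈ J, ∀ y ∈ J, e x = e y → x = y := by
    intro x _ y _ hxy
    have : (p : ℤ) ^ i • x = (p : ℤ) ^ i • y := by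
      have := congrArg (· + (u : Fin n → ℤ)) hxy
      simpa [he, sub_add_cancel] using this
    exact smul_right_injective _ (hppow i) this
  rw [hhw_mul_apply, Matrix.mul_apply]
  have hRHS : ∀ t : {x // x ∈ J},
      γ i u t * ((α (s - i)).map (⇑σ)^[i]) t v = F (e ↑t) := by
    intro t
    rw [Matrix.map_apply, hγ, hα]
    have hMe : M - e ↑t = (p : ℤ) ^ i • ((p : ℤ) ^ (s - i) • (v : Fin n → ℤ) - ↑t) := by
      rw [he, hM, smul_sub, smul_smul, ← pow_add, Nat.add_sub_cancel' his]
      funext k; simp only [Pi.sub_apply, Pi.smul_apply, smul_eq_mul]; ring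
    rw [hF]
    simp only [he]
    rw [hMe, hhw_iter_apply_smul p σ σ' hσ' hp.ne_zero]
  rw [Finset.sum_congr rfl fun t _ => hRHS t, Finset.sum_coe_sort J fun t => F (e t),
    ← Finset.sum_image he_inj]
  have hvanish1 : ∀ x ∈ (δ i).coeff.support ∪ J.image e, x ∉ (δ i).coeff.support → F x = 0 := by
    intro x _ hx
    rw [hF]
    simp [Finsupp.notMem_support_iff.mp hx]
  have hvanish2 : ∀ x ∈ (δ i).coeff.support ∪ J.image e, x ∉ J.image e → F x = 0 := by
    intro x hx hnx
    rcases Finset.mem_union.mp hx with hxs | hxi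
    · by_contra hFx
      have hσne : ((⇑σ')^[i] g).coeff (M - x) ≠ 0 := by
        intro hc
        exact hFx (by rw [hF]; simp only []; rw [hc, mul_zero])
      obtain ⟨τ, hτ⟩ := hhw_iter_apply_exists p σ σ' hσ' hp.ne_zero i g (M - x) hσne
      set t : Fin n → ℤ := (p : ℤ) ^ (s - i) • (v : Fin n → ℤ) - τ with hT
      have hpt : (p : ℤ) ^ i • t = x + (u : Fin n → ℤ) := by
        rw [hT, smul_sub, smul_smul, ← pow_add, Nat.add_sub_cancel' his, ← hτ, hM]
        abel
      have htJ : t ∈ J := hkey x hxs t hpt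
      refine hnx (Finset.mem_image.mpr ⟨t, htJ, ?_⟩)
      rw [he]
      simp only []
      rw [hpt]
      abel
    · exact absurd hxi hnx
  calc ∑ w ∈ (δ i).coeff.support, (δ i).coeff w * ((⇑σ')^[i] g).coeff (M - w)
      = ∑ w ∈ (δ i).coeff.support, F w := rfl
    _ = ∑ w ∈ (δ i).coeff.support ∪ J.image e, F w :=
        Finset.sum_subset Finset.subset_union_left hvanish1
    _ = ∑ w ∈ J.image e, F w :=
        (Finset.sum_subset Finset.subset_union_right hvanish2).symm
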